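/- The polynomials P_n(t) = ∑_{π ∈ AV₁₃₂(n)} t^{a₁₂(π)}, where a₁₂(π) is the number of non-inversions (pairs i<j with π_i < π_j), satisfy the recurrence P_n(t) = ∑_{k=1}^{n} t^{k-1} P_{k-1}(t) P_{n-k}(t) with P_0(t) = 1. -/

import Mathlib

open Finset

/-- A permutation of `{1,…,n}` (modeled on `Fin n`) is 132-avoiding if there are
no indices `i < j < l` with `π i < π l < π j`. -/
def avoids132 {n : ℕ} (π : Equiv.Perm (Fin n)) : Prop :=
  ∀ i j l : Fin n, i < j → j < l → ¬(π i < π l ∧ π l < π j)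

instance avoids132.dec {n : ℕ} : DecidablePred (avoids132 (n := n)) := fun π => by
  unfold avoids132; infer_instance

/-- A permutation is 123-avoiding if there are no indices `i < j < l` with
`π i < π j < π l`. -/
def avoids123 {n : ℕ} (π : Equiv.Perm (Fin n)) : Prop :=
  ∀ i j l : Fin n, i < j → j < l → ¬(π i < π j ∧ π j < π l)

instance avoids123.dec {n : ℕ} : DecidablePred (avoids123 (n := n)) := fun π => by
  unfold avoids123; infer_instance

/-- The finite set of 132-avoiding permutations of `{1,…,n}`. -/
def AV132 (n : ℕ) : Finset (Equiv.Perm (Fin n)) := univ.filter avoids132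

/-- The finite set of 123-avoiding permutations of `{1,…,n}`. -/
def AV123 (n : ℕ) : Finset (Equiv.Perm (Fin n)) := univ.filter avoids123

/-- number of non-inversions: pairs `i < j` with `π i < π j` (pattern 12). -/
def a12 {n : ℕ} (π : Equiv.Perm (Fin n)) : ℕ :=
  (univ.filter (fun p : Fin n × Fin n => p.1 < p.2 ∧ π p.1 < π p.2)).card

/-- number of inversions: pairs `i < j` with `π j < π i` (pattern 21). -/
def a21 {n : ℕ} (π : Equiv.Perm (Fin n)) : ℕ :=
  (univ.filter (fun p : Fin n × Fin n => p.1 < p.2 ∧ π p.2 < π p.1)).card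

/-- occurrences of pattern 123: triples `i < j < l` with `π i < π j < π l`. -/
def a123 {n : ℕ} (π : Equiv.Perm (Fin n)) : ℕ :=
  (univ.filter (fun p : Fin n × Fin n × Fin n =>
    p.1 < p.2.1 ∧ p.2.1 < p.2.2 ∧ π p.1 < π p.2.1 ∧ π p.2.1 < π p.2.2)).card

/-- occurrences of pattern 321: triples `i < j < l` with `π l < π j < π i`. -/
def a321 {n : ℕ} (π : Equiv.Perm (Fin n)) : ℕ :=
  (univ.filter (fun p : Fin n × Fin n × Fin n =>
    p.1 < p.2.1 ∧ p.2.1 < p.2.2 ∧ π p.2.2 < π p.2.1 ∧ π p.2.1 < π p.1)).card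

/-- occurrences of pattern 231: triples `i < j < l` with `π l < π i < π j`. -/
def a231 {n : ℕ} (π : Equiv.Perm (Fin n)) : ℕ :=
  (univ.filter (fun p : Fin n × Fin n × Fin n =>
    p.1 < p.2.1 ∧ p.2.1 < p.2.2 ∧ π p.2.2 < π p.1 ∧ π p.1 < π p.2.1)).card

/-- occurrences of pattern 213: triples `i < j < l` with `π j < π i < π l`. -/
def a213 {n : ℕ} (π : Equiv.Perm (Fin n)) : ℕ :=
  (univ.filter (fun p : Fin n × Fin n × Fin n =>
    p.1 < p.2.1 ∧ p.2.1 < p.2.2 ∧ π p.2.1 < π p.1 ∧ π p.1 < π p.2.2)).card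

/-- occurrences of pattern 312: triples `i < j < l` with `π j < π l < π i`. -/
def a312 {n : ℕ} (π : Equiv.Perm (Fin n)) : ℕ :=
  (univ.filter (fun p : Fin n × Fin n × Fin n =>
    p.1 < p.2.1 ∧ p.2.1 < p.2.2 ∧ π p.2.1 < π p.2.2 ∧ π p.2.2 < π p.1)).card

/-- occurrences of pattern 4321: quadruples `i < j < l < m` with
`π m < π l < π j < π i`. -/
def a4321 {n : ℕ} (π : Equiv.Perm (Fin n)) : ℕ :=
  (univ.filter (fun p : Fin n × Fin n × Fin n × Fin n =>
    p.1 < p.2.1 ∧ p.2.1 < p.2.2.1 ∧ p.2.2.1 < p.2.2.2 ∧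
    π p.2.2.2 < π p.2.2.1 ∧ π p.2.2.1 < π p.2.1 ∧ π p.2.1 < π p.1)).card

open Polynomial

/-- The weight enumerator of 132-avoiding permutations by non-inversions. -/
noncomputable def P12 (n : ℕ) : Polynomial ℤ :=
  ∑ π ∈ AV132 n, (Polynomial.X : Polynomial ℤ) ^ a12 π

section Aux

open Equiv Polynomial

lemma perm_inv_mk {m : ℕ} (α : Equiv.Perm (Fin m)) (x : Fin m) {y : ℕ} (h : y < m)
    (hy : y = α x) : α⁻¹ ⟨y, h⟩ = x := by
  have : (⟨y, h⟩ : Fin m) = α x := Fin.ext hy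
  rw [this]; simp

def glueFun {m r : ℕ} (α : Equiv.Perm (Fin m)) (β : Equiv.Perm (Fin r))
    (i : Fin (m + 1 + r)) : Fin (m + 1 + r) :=
  if h : (i : ℕ) < m then ⟨r + α ⟨i, h⟩, by have := (α ⟨i, h⟩).isLt; omega⟩
  else if h2 : (i : ℕ) = m then ⟨r + m, by omega⟩
  else ⟨β ⟨(i : ℕ) - m - 1, by have := i.isLt; omega⟩, by
    have := (β ⟨(i : ℕ) - m - 1, by have := i.isLt; omega⟩).isLt; omega⟩

def glueInv {m r : ℕ} (α : Equiv.Perm (Fin m)) (β : Equiv.Perm (Fin r))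
    (v : Fin (m + 1 + r)) : Fin (m + 1 + r) :=
  if h : (v : ℕ) < r then ⟨m + 1 + β⁻¹ ⟨v, h⟩, by have := (β⁻¹ ⟨v, h⟩).isLt; omega⟩
  else if h2 : (v : ℕ) < r + m then ⟨α⁻¹ ⟨(v : ℕ) - r, by omega⟩, by
    have := (α⁻¹ ⟨(v : ℕ) - r, by omega⟩).isLt; omega⟩
  else ⟨m, by omega⟩

def glue {m r : ℕ} (α : Equiv.Perm (Fin m)) (β : Equiv.Perm (Fin r)) :
    Equiv.Perm (Fin (m + 1 + r)) where
  toFun := glueFun α β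
  invFun := glueInv α β
  left_inv := by
    intro i
    unfold glueFun glueInv
    by_cases h : (i : ℕ) < m
    · have hlt := (α ⟨i, h⟩).isLt
      rw [dif_pos h, dif_neg (by simp), dif_pos (by simp)]
      ext
      simp only []
      rw [perm_inv_mk α ⟨i, h⟩ (by simp) (by simp)]
    · by_cases h2 : (i : ℕ) = m
      · rw [dif_neg h, dif_pos h2, dif_neg (by simp), dif_neg (by simp)]
        ext; simp; omega
      · have hi := i.isLt
        rw [dif_neg h, dif_neg h2]
        have hb := (β ⟨(i : ℕ) - m - 1, by omega⟩).isLt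
        rw [dif_pos (by simpa using hb)]
        ext
        simp only []
        rw [perm_inv_mk β ⟨(i : ℕ) - m - 1, by omega⟩ (by simpa using hb) (by simp)]
        simp; omega
  right_inv := by
    intro v
    unfold glueFun glueInv
    by_cases h : (v : ℕ) < r
    · have hb := (β⁻¹ ⟨v, h⟩).isLt
      rw [dif_pos h, dif_neg (by simp; omega), dif_neg (by simp; omega)]
      ext
      simp only []
      have : (⟨(m + 1 + (β⁻¹ ⟨v, h⟩ : Fin r) : ℕ) - m - 1, by omega⟩ : Fin r)
          = β⁻¹ ⟨v, h⟩ := by ext; simp; omega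
      rw [this]; simp
    · by_cases h2 : (v : ℕ) < r + m
      · have ha := (α⁻¹ ⟨(v : ℕ) - r, by omega⟩).isLt
        rw [dif_neg h, dif_pos h2, dif_pos (by simpa using ha)]
        ext
        simp only []
        have : (⟨((α⁻¹ ⟨(v:ℕ) - r, by omega⟩ : Fin m) : ℕ), by simpa using ha⟩ : Fin m)
            = α⁻¹ ⟨(v:ℕ) - r, by omega⟩ := by ext; simp
        rw [this]; simp
        omega
      · have hv := v.isLt
        rw [dif_neg h, dif_neg h2, dif_neg (by simp), dif_pos (by simp)]
        ext; simp; omega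

section lemmas
variable {m r : ℕ} (α : Equiv.Perm (Fin m)) (β : Equiv.Perm (Fin r))

lemma glue_apply (i : Fin (m + 1 + r)) : glue α β i = glueFun α β i := rfl

lemma glue_val_prefix (i : Fin (m + 1 + r)) (h : (i : ℕ) < m) :
    (glue α β i : ℕ) = r + α ⟨i, h⟩ := by
  rw [glue_apply]; unfold glueFun; rw [dif_pos h]

lemma glue_val_mid (i : Fin (m + 1 + r)) (h : (i : ℕ) = m) :
    (glue α β i : ℕ) = r + m := by
  rw [glue_apply]; unfold glueFun; rw [dif_neg (by omega), dif_pos h]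

lemma glue_val_suffix (i : Fin (m + 1 + r)) (h : m < (i : ℕ)) :
    (glue α β i : ℕ) = β ⟨(i : ℕ) - m - 1, by have := i.isLt; omega⟩ := by
  rw [glue_apply]; unfold glueFun; rw [dif_neg (by omega), dif_neg (by omega)]

lemma glue_prefix_bounds (i : Fin (m + 1 + r)) (h : (i : ℕ) < m) :
    r ≤ (glue α β i : ℕ) ∧ (glue α β i : ℕ) < r + m := by
  rw [glue_val_prefix α β i h]
  have := (α ⟨i, h⟩).isLt; omega

lemma glue_suffix_bounds (i : Fin (m + 1 + r)) (h : m < (i : ℕ)) :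
    (glue α β i : ℕ) < r := by
  rw [glue_val_suffix α β i h]
  exact (β _).isLt


lemma glue_val_prefix' (w : Fin m) :
    ((glue α β) ⟨(w : ℕ), by omega⟩ : ℕ) = r + α w := by
  rw [glue_val_prefix α β _ (show ((⟨(w:ℕ), by omega⟩ : Fin (m+1+r)) : ℕ) < m from w.isLt)]

lemma glue_val_suffix' (w : Fin r) :
    ((glue α β) ⟨m + 1 + (w : ℕ), by omega⟩ : ℕ) = β w := by
  rw [glue_val_suffix α β _ (show m < m + 1 + (w : ℕ) by omega)]
  exact congrArg (fun t => ((β t : Fin r) : ℕ)) (Fin.ext (show m + 1 + (w:ℕ) - m - 1 = w by omega))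

lemma glue_avoids : avoids132 (glue α β) ↔ avoids132 α ∧ avoids132 β := by
  constructor
  · intro H
    constructor
    · intro x y z hxy hyz ⟨h1, h2⟩
      have hx := x.isLt; have hy := y.isLt; have hz := z.isLt
      refine H ⟨x, by omega⟩ ⟨y, by omega⟩ ⟨z, by omega⟩ hxy hyz ⟨?_, ?_⟩ <;>
        rw [Fin.lt_def, glue_val_prefix', glue_val_prefix'] <;>
        [exact Nat.add_lt_add_left h1 r; exact Nat.add_lt_add_left h2 r]
    · intro x y z hxy hyz ⟨h1, h2⟩
      have hx := x.isLt; have hy := y.isLt; have hz := z.isLt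
      refine H ⟨m + 1 + x, by omega⟩ ⟨m + 1 + y, by omega⟩ ⟨m + 1 + z, by omega⟩
        (show m + 1 + (x:ℕ) < m + 1 + (y:ℕ) by omega)
        (show m + 1 + (y:ℕ) < m + 1 + (z:ℕ) by omega) ⟨?_, ?_⟩ <;>
        rw [Fin.lt_def, glue_val_suffix', glue_val_suffix'] <;>
        [exact h1; exact h2]
  · rintro ⟨hα, hβ⟩ i j l hij hjl ⟨h1, h2⟩
    rw [Fin.lt_def] at hij hjl h1 h2
    rcases Nat.lt_trichotomy (i : ℕ) m with hi | hi | hi <;>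
      rcases Nat.lt_trichotomy (j : ℕ) m with hj | hj | hj <;>
      rcases Nat.lt_trichotomy (l : ℕ) m with hl | hl | hl <;>
      try omega
    -- PPP
    · rw [glue_val_prefix α β i hi] at h1
      rw [glue_val_prefix α β j hj] at h2
      rw [glue_val_prefix α β l hl] at h1 h2
      refine hα ⟨i, hi⟩ ⟨j, hj⟩ ⟨l, hl⟩ hij hjl ⟨?_, ?_⟩ <;> rw [Fin.lt_def] <;> omega
    -- PPM
    · have hb := glue_prefix_bounds α β j hj
      rw [glue_val_mid α β l hl] at h2; omega
    -- PPS
    · have hb := glue_prefix_bounds α β i hi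
      have hb2 := glue_suffix_bounds α β l hl; omega
    -- PMS
    · have hb := glue_prefix_bounds α β i hi
      have hb2 := glue_suffix_bounds α β l hl; omega
    -- PSS
    · have hb := glue_prefix_bounds α β i hi
      have hb2 := glue_suffix_bounds α β l hl; omega
    -- MSS
    · rw [glue_val_mid α β i hi] at h1
      have hb2 := glue_suffix_bounds α β l hl; omega
    -- SSS
    · rw [glue_val_suffix α β i hi] at h1
      rw [glue_val_suffix α β j hj] at h2
      rw [glue_val_suffix α β l hl] at h1 h2
      have hi' := i.isLt; have hj' := j.isLt; have hl' := l.isLt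
      refine hβ ⟨(i:ℕ) - m - 1, by omega⟩ ⟨(j:ℕ) - m - 1, by omega⟩ ⟨(l:ℕ) - m - 1, by omega⟩
        (show (i:ℕ) - m - 1 < (j:ℕ) - m - 1 by omega)
        (show (j:ℕ) - m - 1 < (l:ℕ) - m - 1 by omega) ⟨?_, ?_⟩ <;>
        rw [Fin.lt_def] <;> omega

def epre : Fin m → Fin (m + 1 + r) := fun x => ⟨x, by omega⟩
def esuf : Fin r → Fin (m + 1 + r) := fun c => ⟨m + 1 + c, by omega⟩

lemma epre_val (x : Fin m) : ((epre x : Fin (m+1+r)) : ℕ) = x := rfl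
lemma esuf_val (x : Fin r) : ((esuf x : Fin (m+1+r)) : ℕ) = m + 1 + x := rfl

lemma glue_epre (x : Fin m) : ((glue α β) (epre x) : ℕ) = r + α x := glue_val_prefix' α β x
lemma glue_esuf (x : Fin r) : ((glue α β) (esuf x) : ℕ) = β x := glue_val_suffix' α β x

lemma glue_a12 :
    (univ.filter (fun p : Fin (m+1+r) × Fin (m+1+r) =>
        p.1 < p.2 ∧ glue α β p.1 < glue α β p.2)).card
      = m + (univ.filter (fun p : Fin m × Fin m => p.1 < p.2 ∧ α p.1 < α p.2)).card
          + (univ.filter (fun p : Fin r × Fin r => p.1 < p.2 ∧ β p.1 < β p.2)).card := by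
  classical
  set F1 : Finset (Fin (m+1+r) × Fin (m+1+r)) :=
    (univ.filter (fun p : Fin m × Fin m => p.1 < p.2 ∧ α p.1 < α p.2)).image
      (fun p => (epre p.1, epre p.2)) with hF1
  set F2 : Finset (Fin (m+1+r) × Fin (m+1+r)) :=
    (univ.filter (fun p : Fin r × Fin r => p.1 < p.2 ∧ β p.1 < β p.2)).image
      (fun p => (esuf p.1, esuf p.2)) with hF2
  set F3 : Finset (Fin (m+1+r) × Fin (m+1+r)) :=
    (univ : Finset (Fin m)).image (fun x => (epre x, (⟨m, by omega⟩ : Fin (m+1+r)))) with hF3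
  have hmemF1 : ∀ p ∈ F1, (p.1 : Fin (m+1+r)).val < m ∧ (p.2 : Fin (m+1+r)).val < m := by
    rintro p hp
    rw [hF1, mem_image] at hp
    obtain ⟨q, hq, rfl⟩ := hp
    exact ⟨(q.1).isLt, (q.2).isLt⟩
  have hmemF2 : ∀ p ∈ F2, m < (p.1 : Fin (m+1+r)).val ∧ m < (p.2 : Fin (m+1+r)).val := by
    rintro p hp
    rw [hF2, mem_image] at hp
    obtain ⟨q, hq, rfl⟩ := hp
    constructor <;> simp [esuf_val] <;> omega
  have hmemF3 : ∀ p ∈ F3, (p.1 : Fin (m+1+r)).val < m ∧ (p.2 : Fin (m+1+r)).val = m := by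
    rintro p hp
    rw [hF3, mem_image] at hp
    obtain ⟨q, hq, rfl⟩ := hp
    exact ⟨q.isLt, rfl⟩
  have hunion : (univ.filter (fun p : Fin (m+1+r) × Fin (m+1+r) =>
      p.1 < p.2 ∧ glue α β p.1 < glue α β p.2)) = F1 ∪ F2 ∪ F3 := by
    ext ⟨i, j⟩
    simp only [mem_filter, mem_union, mem_univ, true_and]
    constructor
    · rintro ⟨hij, hv⟩
      rw [Fin.lt_def] at hij hv
      rcases Nat.lt_trichotomy (i : ℕ) m with hi | hi | hi <;>
        rcases Nat.lt_trichotomy (j : ℕ) m with hj | hj | hj <;>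
        try omega
      -- PP
      · left; left
        rw [hF1, mem_image]
        refine ⟨(⟨i, hi⟩, ⟨j, hj⟩), ?_, ?_⟩
        · rw [mem_filter]
          refine ⟨mem_univ _, hij, ?_⟩
          show (α ⟨(i:ℕ), hi⟩ : Fin m) < α ⟨(j:ℕ), hj⟩
          rw [Fin.lt_def]
          rw [glue_val_prefix α β i hi, glue_val_prefix α β j hj] at hv
          omega
        · exact Prod.ext (Fin.ext rfl) (Fin.ext rfl)
      -- PM
      · right
        rw [hF3, mem_image]
        exact ⟨⟨i, hi⟩, mem_univ _, Prod.ext (Fin.ext rfl) (Fin.ext hj.symm)⟩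
      -- PS
      · exfalso
        have hb := glue_prefix_bounds α β i hi
        have hb2 := glue_suffix_bounds α β j hj
        omega
      -- MS
      · exfalso
        rw [glue_val_mid α β i hi] at hv
        have hb2 := glue_suffix_bounds α β j hj
        omega
      -- SS
      · left; right
        rw [hF2, mem_image]
        refine ⟨(⟨(i:ℕ) - m - 1, by have := i.isLt; omega⟩, ⟨(j:ℕ) - m - 1, by have := j.isLt; omega⟩), ?_, ?_⟩
        · rw [mem_filter]
          refine ⟨mem_univ _, show (i:ℕ) - m - 1 < (j:ℕ) - m - 1 by omega, ?_⟩
          show (β ⟨(i:ℕ) - m - 1, _⟩ : Fin r) < β ⟨(j:ℕ) - m - 1, _⟩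
          rw [Fin.lt_def]
          rw [glue_val_suffix α β i hi, glue_val_suffix α β j hj] at hv
          omega
        · exact Prod.ext (Fin.ext (show m + 1 + ((i:ℕ) - m - 1) = i by omega))
            (Fin.ext (show m + 1 + ((j:ℕ) - m - 1) = j by omega))
    · intro hp
      rcases hp with (hp | hp) | hp
      · obtain ⟨hi, hj⟩ := hmemF1 _ hp
        rw [hF1, mem_image] at hp
        obtain ⟨q, hq, heq⟩ := hp
        rw [mem_filter] at hq
        obtain ⟨-, hq1, hq2⟩ := hq
        have h1 : epre q.1 = i := congrArg Prod.fst heq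
        have h2 : epre q.2 = j := congrArg Prod.snd heq
        subst h1; subst h2
        rw [Fin.lt_def] at hq1 ⊢
        refine ⟨hq1, ?_⟩
        rw [Fin.lt_def, glue_epre, glue_epre]
        exact Nat.add_lt_add_left (Fin.lt_def.mp hq2) r
      · obtain ⟨hi, hj⟩ := hmemF2 _ hp
        rw [hF2, mem_image] at hp
        obtain ⟨q, hq, heq⟩ := hp
        rw [mem_filter] at hq
        obtain ⟨-, hq1, hq2⟩ := hq
        have h1 : esuf q.1 = i := congrArg Prod.fst heq
        have h2 : esuf q.2 = j := congrArg Prod.snd heq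
        subst h1; subst h2
        refine ⟨show ((esuf q.1 : Fin (m+1+r)) : ℕ) < esuf q.2 by
          rw [esuf_val, esuf_val]; have := Fin.lt_def.mp hq1; omega, ?_⟩
        rw [Fin.lt_def, glue_esuf, glue_esuf]
        exact Fin.lt_def.mp hq2
      · obtain ⟨hi, hj⟩ := hmemF3 _ hp
        rw [hF3, mem_image] at hp
        obtain ⟨q, -, heq⟩ := hp
        have h1 : epre q = i := congrArg Prod.fst heq
        have h2 : ((⟨m, by omega⟩ : Fin (m+1+r))) = j := congrArg Prod.snd heq
        subst h1
        constructor
        · rw [Fin.lt_def, ← h2]; exact q.isLt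
        · rw [Fin.lt_def, ← h2, glue_epre, glue_val_mid α β _ rfl]
          have := (α q).isLt; omega
  rw [hunion]
  rw [card_union_of_disjoint, card_union_of_disjoint]
  · rw [hF1, hF2, hF3, card_image_of_injective, card_image_of_injective,
      card_image_of_injective, card_univ, Fintype.card_fin]
    · ring
    · intro x y hxy
      exact Fin.ext (congrArg (fun t : Fin (m+1+r) × Fin (m+1+r) => (t.1 : ℕ)) hxy)
    · intro x y hxy
      have e1 : m + 1 + (x.1 : ℕ) = m + 1 + (y.1 : ℕ) :=
        congrArg (fun t : Fin (m+1+r) × Fin (m+1+r) => (t.1 : ℕ)) hxy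
      have e2 : m + 1 + (x.2 : ℕ) = m + 1 + (y.2 : ℕ) :=
        congrArg (fun t : Fin (m+1+r) × Fin (m+1+r) => (t.2 : ℕ)) hxy
      exact Prod.ext (Fin.ext (by omega)) (Fin.ext (by omega))
    · intro x y hxy
      exact Prod.ext (Fin.ext (congrArg (fun t : Fin (m+1+r) × Fin (m+1+r) => (t.1 : ℕ)) hxy))
        (Fin.ext (congrArg (fun t : Fin (m+1+r) × Fin (m+1+r) => (t.2 : ℕ)) hxy))
  · rw [disjoint_left]
    intro p hp hp2
    have := (hmemF1 _ hp).1
    have := (hmemF2 _ hp2).1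
    omega
  · rw [disjoint_left]
    intro p hp hp3
    rcases mem_union.mp hp with hp | hp
    · have := (hmemF1 _ hp).2
      have := (hmemF3 _ hp3).2
      omega
    · have := (hmemF2 _ hp).2
      have := (hmemF3 _ hp3).2
      omega


lemma unglue (π : Equiv.Perm (Fin (m + 1 + r))) (hπ : avoids132 π)
    (hpos : π ⟨m, by omega⟩ = ⟨r + m, by omega⟩) :
    ∃ (α : Equiv.Perm (Fin m)) (β : Equiv.Perm (Fin r)), glue α β = π := by
  have hne_top : ∀ x : Fin (m + 1 + r), (x : ℕ) ≠ m → (π x : ℕ) < r + m := by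
    intro x hx
    have h1 : (π x : ℕ) < m + 1 + r := (π x).isLt
    have h2 : π x ≠ ⟨r + m, by omega⟩ := by
      rw [← hpos]
      intro hcon
      exact hx (congrArg Fin.val (π.injective hcon))
    have : (π x : ℕ) ≠ r + m := fun hc => h2 (Fin.ext hc)
    omega
  have step1 : ∀ i l : Fin (m + 1 + r), (i : ℕ) < m → m < (l : ℕ) → (π l : ℕ) < π i := by
    intro i l hi hl
    by_contra hcon
    have hne : π i ≠ π l := fun hc => by
      have := congrArg Fin.val (π.injective hc); omega
    have hlt : (π i : ℕ) < π l := by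
      have : (π i : ℕ) ≠ π l := fun hc => hne (Fin.ext hc)
      omega
    have htop : (π l : ℕ) < r + m := hne_top l (by omega)
    exact hπ i ⟨m, by omega⟩ l (show (i:ℕ) < m from hi) (show m < (l:ℕ) from hl)
      ⟨show (π i : ℕ) < π l from hlt, show (π l : ℕ) < (π ⟨m, by omega⟩ : ℕ) by
        rw [hpos]; exact htop⟩
  have step2 : ∀ l : Fin (m + 1 + r), m < (l : ℕ) → (π l : ℕ) < r := by
    intro l hl
    have hsub : (Finset.Iic (⟨m, by omega⟩ : Fin (m+1+r))).image π ⊆ Finset.Ioi (π l) := by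
      intro v hv
      rw [mem_image] at hv
      obtain ⟨x, hx, rfl⟩ := hv
      rw [mem_Iic] at hx
      have hxm : (x : ℕ) ≤ m := hx
      rw [mem_Ioi]
      rcases Nat.lt_or_ge (x : ℕ) m with h | h
      · exact show (π l : ℕ) < π x from step1 x l h hl
      · have hxe : x = ⟨m, by omega⟩ := Fin.ext (show (x:ℕ) = m by omega)
        rw [hxe, hpos]
        exact show (π l : ℕ) < r + m from hne_top l (by omega)
    have hcard := card_le_card hsub
    rw [card_image_of_injective _ π.injective, Fin.card_Iic, Fin.card_Ioi] at hcard
    simp only [] at hcard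
    omega
  have step3 : ∀ i : Fin (m + 1 + r), (i : ℕ) < m → r ≤ (π i : ℕ) := by
    intro i hi
    have hsub : (Finset.Ioi (⟨m, by omega⟩ : Fin (m+1+r))).image π ⊆ Finset.Iio (π i) := by
      intro v hv
      rw [mem_image] at hv
      obtain ⟨x, hx, rfl⟩ := hv
      rw [mem_Ioi] at hx
      rw [mem_Iio]
      exact show (π x : ℕ) < π i from step1 i x hi hx
    have hcard := card_le_card hsub
    rw [card_image_of_injective _ π.injective, Fin.card_Ioi, Fin.card_Iio] at hcard
    simp only [] at hcard
    omega
  have hpre_lt : ∀ x : Fin m, (π (epre x) : ℕ) - r < m := by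
    intro x
    have hh : (π (epre x) : ℕ) < r + m := hne_top (epre x) (by rw [epre_val]; omega)
    have hx := x.isLt
    omega
  set αf : Fin m → Fin m := fun x => ⟨(π (epre x) : ℕ) - r, hpre_lt x⟩ with hαf
  have hαinj : Function.Injective αf := by
    intro x y hxy
    have h1 := step3 (epre x) x.isLt
    have h2 := step3 (epre y) y.isLt
    have : (π (epre x) : ℕ) - r = (π (epre y) : ℕ) - r := congrArg Fin.val hxy
    have : π (epre x) = π (epre y) := Fin.ext (by omega)
    have h5 := π.injective this
    have h7 : ((epre x : Fin (m+1+r)) : ℕ) = epre y := congrArg Fin.val h5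
    exact Fin.ext h7
  set βf : Fin r → Fin r := fun c => ⟨π (esuf c), step2 (esuf c) (by rw [esuf_val]; omega)⟩ with hβf
  have hβinj : Function.Injective βf := by
    intro x y hxy
    have h7 : ((βf x : Fin r) : ℕ) = βf y := congrArg Fin.val hxy
    have : π (esuf x) = π (esuf y) := Fin.ext h7
    have h5 := π.injective this
    have h6 : m + 1 + (x : ℕ) = m + 1 + (y : ℕ) := congrArg Fin.val h5
    exact Fin.ext (by omega)
  refine ⟨Equiv.ofBijective αf ((Finite.injective_iff_bijective).mp hαinj),
    Equiv.ofBijective βf ((Finite.injective_iff_bijective).mp hβinj), ?_⟩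
  apply Equiv.ext
  intro i
  apply Fin.ext
  rcases Nat.lt_trichotomy (i : ℕ) m with hi | hi | hi
  · rw [glue_val_prefix _ _ i hi]
    have he : epre (⟨(i : ℕ), hi⟩ : Fin m) = i := Fin.ext rfl
    have : (Equiv.ofBijective αf ((Finite.injective_iff_bijective).mp hαinj)) ⟨(i:ℕ), hi⟩
        = αf ⟨(i:ℕ), hi⟩ := rfl
    rw [this, hαf]
    simp only []
    rw [he]
    have := step3 i hi
    omega
  · have he : i = ⟨m, by omega⟩ := Fin.ext hi
    rw [glue_val_mid _ _ i hi, he, hpos]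
  · rw [glue_val_suffix _ _ i hi]
    have he : esuf (⟨(i : ℕ) - m - 1, by have := i.isLt; omega⟩ : Fin r) = i :=
      Fin.ext (show m + 1 + ((i : ℕ) - m - 1) = i by omega)
    have : (Equiv.ofBijective βf ((Finite.injective_iff_bijective).mp hβinj))
        ⟨(i:ℕ) - m - 1, by have := i.isLt; omega⟩
        = βf ⟨(i:ℕ) - m - 1, by have := i.isLt; omega⟩ := rfl
    rw [this, hβf]
    simp only []
    rw [he]

end lemmas

section final
open Polynomial



lemma glue_inner_sum (m r : ℕ) :
    ∑ π ∈ (AV132 (m + 1 + r)).filter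
        (fun π => π ⟨m, by omega⟩ = ⟨r + m, by omega⟩),
        (Polynomial.X : Polynomial ℤ) ^ a12 π
      = Polynomial.X ^ m * P12 m * P12 r := by
  classical
  have hrhs : (Polynomial.X : Polynomial ℤ) ^ m * P12 m * P12 r
      = ∑ p ∈ AV132 m ×ˢ AV132 r, (Polynomial.X : Polynomial ℤ) ^ (m + a12 p.1 + a12 p.2) := by
    rw [Finset.sum_product, P12, P12, mul_assoc, Finset.sum_mul_sum, Finset.mul_sum]
    refine sum_congr rfl fun a ha => ?_
    rw [Finset.mul_sum]
    refine sum_congr rfl fun b hb => ?_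
    rw [pow_add, pow_add]
    ring
  rw [hrhs]
  refine (Finset.sum_bij (fun p _ => glue p.1 p.2) ?_ ?_ ?_ ?_).symm
  · rintro ⟨α, β⟩ hp
    rw [mem_product] at hp
    obtain ⟨hα, hβ⟩ := hp
    rw [AV132, mem_filter] at hα hβ
    rw [mem_filter]
    refine ⟨?_, Fin.ext (glue_val_mid α β _ rfl)⟩
    rw [AV132, mem_filter]
    exact ⟨mem_univ _, (glue_avoids α β).mpr ⟨hα.2, hβ.2⟩⟩
  · rintro ⟨α, β⟩ h1 ⟨α', β'⟩ h2 heq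
    have hα : α = α' := by
      apply Equiv.ext
      intro x
      have h3 := congrArg (fun σ : Equiv.Perm (Fin (m+1+r)) => ((σ (epre x)) : ℕ)) heq
      simp only [] at h3
      rw [glue_epre, glue_epre] at h3
      exact Fin.ext (by omega)
    have hβ : β = β' := by
      apply Equiv.ext
      intro x
      have h3 := congrArg (fun σ : Equiv.Perm (Fin (m+1+r)) => ((σ (esuf x)) : ℕ)) heq
      simp only [] at h3
      rw [glue_esuf, glue_esuf] at h3
      exact Fin.ext h3
    rw [hα, hβ]
  · intro π hπ
    rw [mem_filter, AV132, mem_filter] at hπ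
    obtain ⟨⟨-, hav⟩, hpos⟩ := hπ
    obtain ⟨α, β, hglue⟩ := unglue π hav hpos
    have hav2 := (glue_avoids α β).mp (hglue ▸ hav)
    refine ⟨(α, β), ?_, hglue⟩
    rw [mem_product, AV132, AV132, mem_filter, mem_filter]
    exact ⟨⟨mem_univ _, hav2.1⟩, mem_univ _, hav2.2⟩
  · rintro ⟨α, β⟩ hp
    simp only []
    unfold a12
    rw [glue_a12]

theorem P12_recurrence_aux :
    P12 0 = 1 ∧
    ∀ n : ℕ, 1 ≤ n →
      P12 n = ∑ k ∈ Finset.Icc 1 n,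
        (Polynomial.X : Polynomial ℤ) ^ (k - 1) * P12 (k - 1) * P12 (n - k) := by
  constructor
  · have huniq : ∀ π : Equiv.Perm (Fin 0), π = 1 := fun π => Equiv.ext (fun i => i.elim0)
    have h0 : AV132 0 = {1} := by
      ext π
      simp only [AV132, mem_filter, mem_univ, true_and, mem_singleton]
      constructor
      · intro _; exact huniq π
      · intro _ i j l _ _ _; exact i.elim0
    rw [P12, h0, sum_singleton]
    have ha : a12 (1 : Equiv.Perm (Fin 0)) = 0 := by
      rw [a12]
      apply Finset.card_eq_zero.mpr
      rw [Finset.eq_empty_iff_forall_notMem]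
      exact fun p _ => p.1.elim0
    rw [ha, pow_zero]
  · intro n hn
    classical
    have hmap : ∀ π ∈ AV132 n, ((π⁻¹ ⟨n - 1, by omega⟩ : Fin n) : ℕ) + 1 ∈ Finset.Icc 1 n := by
      intro π _
      rw [mem_Icc]
      have := (π⁻¹ (⟨n - 1, by omega⟩ : Fin n)).isLt
      omega
    rw [P12, ← Finset.sum_fiberwise_of_maps_to hmap]
    refine sum_congr rfl fun k hk => ?_
    rw [mem_Icc] at hk
    obtain ⟨m, rfl⟩ : ∃ m, k = m + 1 := ⟨k - 1, by omega⟩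
    obtain ⟨r, rfl⟩ : ∃ r, n = m + 1 + r := ⟨n - (m + 1), by omega⟩
    have hfe : (AV132 (m + 1 + r)).filter
        (fun π => ((π⁻¹ ⟨m + 1 + r - 1, by omega⟩ : Fin (m + 1 + r)) : ℕ) + 1 = m + 1)
        = (AV132 (m + 1 + r)).filter
          (fun π => π ⟨m, by omega⟩ = ⟨r + m, by omega⟩) := by
      apply Finset.filter_congr
      intro π _
      constructor
      · intro h
        have h2 : π⁻¹ ⟨m + 1 + r - 1, by omega⟩ = (⟨m, by omega⟩ : Fin (m + 1 + r)) :=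
          Fin.ext (show ((π⁻¹ ⟨m + 1 + r - 1, by omega⟩ : Fin (m+1+r)) : ℕ) = m by omega)
        have h3 := congrArg π h2
        rw [Equiv.Perm.inv_def, Equiv.apply_symm_apply] at h3
        rw [← h3]
        exact Fin.ext (show m + 1 + r - 1 = r + m by omega)
      · intro h
        have h2 : π⁻¹ ⟨m + 1 + r - 1, by omega⟩ = (⟨m, by omega⟩ : Fin (m + 1 + r)) := by
          have he : (⟨m + 1 + r - 1, by omega⟩ : Fin (m + 1 + r)) = ⟨r + m, by omega⟩ :=
            Fin.ext (show m + 1 + r - 1 = r + m by omega)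
          rw [he, ← h, Equiv.Perm.inv_def, Equiv.symm_apply_apply]
        rw [h2]
    rw [hfe, glue_inner_sum m r]
    rw [show m + 1 - 1 = m from rfl, show m + 1 + r - (m + 1) = r from by omega]

end final

end Aux


/-- `P_n(t) = ∑_{k=1}^n t^{k-1} P_{k-1}(t) P_{n-k}(t)`, `P_0 = 1`. -/
theorem P12_recurrence :
    P12 0 = 1 ∧
    ∀ n : ℕ, 1 ≤ n →
      P12 n = ∑ k ∈ Finset.Icc 1 n,
        (Polynomial.X : Polynomial ℤ) ^ (k - 1) * P12 (k - 1) * P12 (n - k) := by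
  exact P12_recurrence_aux
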